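/- Let 𝒳, 𝒜 be nonempty finite types, p_X a probability mass function on 𝒳, and p a channel from 𝒳 to 𝒜 such that Σ_x p_X(x) p(a|x)² > 0 for every a. Then over strictly positive probability mass functions q on 𝒜, the Pearson χ² objective q ↦ Σ_{x,a} p_X(x) q(a) (p(a|x)/q(a) − 1)² attains its minimum uniquely at q*(a) = √(Σ_x p_X(x) p(a|x)²) / Σ_{a'} √(Σ_x p_X(x) p(a'|x)²). -/

import Mathlib

open Finset Real

/-- A probability mass function on a finite type. -/
def IsPMF {Z : Type*} [Fintype Z] (p : Z → ℝ) : Prop :=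
  (∀ z, 0 ≤ p z) ∧ ∑ z, p z = 1

/-- A channel from `X` to `A`: a family of pmfs on `A` indexed by `X`. -/
def IsChannel {X A : Type*} [Fintype X] [Fintype A] (W : X → A → ℝ) : Prop :=
  ∀ x, IsPMF (W x)

/-- Expected loss `Σ_{x,a} p_X(x) p_{A|X}(a|x) ℓ(x,a)`. -/
noncomputable def expLoss {X A : Type*} [Fintype X] [Fintype A]
    (pX : X → ℝ) (ℓ : X → A → ℝ) (W : X → A → ℝ) : ℝ :=
  ∑ x, ∑ a, pX x * W x a * ℓ x a

lemma objective_eq_aux {X A : Type*} [Fintype X] [Fintype A]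
    (pX : X → ℝ) (hpX : IsPMF pX) (p : X → A → ℝ) (hp : IsChannel p)
    (q : A → ℝ) (hq : IsPMF q) (hqpos : ∀ a, 0 < q a) :
    (∑ x, ∑ a, pX x * q a * (p x a / q a - 1) ^ 2)
      = (∑ a, (∑ x, pX x * p x a ^ 2) / q a) - 1 := by
  have h1 : ∀ x a, pX x * q a * (p x a / q a - 1) ^ 2
      = pX x * p x a ^ 2 / q a - 2 * (pX x * p x a) + pX x * q a := by
    intro x a
    have hq0 : q a ≠ 0 := (hqpos a).ne'
    field_simp
    ring
  have h2 : (∑ x, ∑ a, pX x * q a * (p x a / q a - 1) ^ 2)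
      = (∑ x, ∑ a, pX x * p x a ^ 2 / q a)
        - 2 * (∑ x, ∑ a, pX x * p x a) + ∑ x, ∑ a, pX x * q a := by
    simp only [h1, Finset.sum_sub_distrib, Finset.sum_add_distrib, ← Finset.mul_sum]
  have h3 : (∑ x, ∑ a, pX x * p x a ^ 2 / q a)
      = ∑ a, (∑ x, pX x * p x a ^ 2) / q a := by
    rw [Finset.sum_comm]
    simp [Finset.sum_div]
  have h4 : (∑ x, ∑ a, pX x * p x a) = 1 := by
    have : ∀ x, ∑ a, pX x * p x a = pX x := by
      intro x
      rw [← Finset.mul_sum, (hp x).2, mul_one]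
    simp [this, hpX.2]
  have h5 : (∑ x, ∑ a, pX x * q a) = 1 := by
    have : ∀ x, ∑ a, pX x * q a = pX x := by
      intro x
      rw [← Finset.mul_sum, hq.2, mul_one]
    simp [this, hpX.2]
  rw [h2, h3, h4, h5]
  ring

lemma key_identity {A : Type*} [Fintype A]
    (S : A → ℝ) (hS : ∀ a, 0 < S a)
    (q : A → ℝ) (hq : IsPMF q) (hqpos : ∀ a, 0 < q a) :
    (∑ a, S a / q a) - (∑ a, Real.sqrt (S a)) ^ 2
      = ∑ a, (Real.sqrt (S a) / Real.sqrt (q a)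
          - (∑ a', Real.sqrt (S a')) * Real.sqrt (q a)) ^ 2 := by
  set T : ℝ := ∑ a', Real.sqrt (S a') with hT
  have e : ∀ a, (Real.sqrt (S a) / Real.sqrt (q a) - T * Real.sqrt (q a)) ^ 2
      = S a / q a - 2 * T * Real.sqrt (S a) + T ^ 2 * q a := by
    intro a
    have h1 : Real.sqrt (q a) ≠ 0 := ne_of_gt (Real.sqrt_pos.2 (hqpos a))
    have h2 : Real.sqrt (q a) ^ 2 = q a := Real.sq_sqrt (hqpos a).le
    have h3 : Real.sqrt (S a) ^ 2 = S a := Real.sq_sqrt (hS a).le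
    rw [← h2, ← h3]
    field_simp
    rw [Real.sqrt_sq (Real.sqrt_nonneg (S a)), Real.sqrt_sq (Real.sqrt_nonneg (q a))]
    ring
  simp only [e, Finset.sum_add_distrib, Finset.sum_sub_distrib, ← Finset.mul_sum]
  rw [← hT, hq.2]
  ring

theorem pearson_chi_sq_minimizer
    {X A : Type*} [Fintype X] [Fintype A] [Nonempty X] [Nonempty A]
    (pX : X → ℝ) (hpX : IsPMF pX)
    (p : X → A → ℝ) (hp : IsChannel p)
    (hpos : ∀ a, 0 < ∑ x, pX x * p x a ^ 2) :
    letI qstar : A → ℝ := fun a =>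
      Real.sqrt (∑ x, pX x * p x a ^ 2) / ∑ a', Real.sqrt (∑ x, pX x * p x a' ^ 2)
    (IsPMF qstar ∧ (∀ a, 0 < qstar a)) ∧
      (∀ q : A → ℝ, IsPMF q → (∀ a, 0 < q a) →
        (∑ x, ∑ a, pX x * qstar a * (p x a / qstar a - 1) ^ 2)
          ≤ ∑ x, ∑ a, pX x * q a * (p x a / q a - 1) ^ 2) ∧
      (∀ q : A → ℝ, IsPMF q → (∀ a, 0 < q a) →
        (∑ x, ∑ a, pX x * q a * (p x a / q a - 1) ^ 2)
            = (∑ x, ∑ a, pX x * qstar a * (p x a / qstar a - 1) ^ 2) →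
        q = qstar) := by
  set qstar : A → ℝ := fun a =>
    Real.sqrt (∑ x, pX x * p x a ^ 2) / ∑ a', Real.sqrt (∑ x, pX x * p x a' ^ 2)
    with hqstardef
  set S : A → ℝ := fun a => ∑ x, pX x * p x a ^ 2 with hSdef
  set T : ℝ := ∑ a', Real.sqrt (S a') with hTdef
  have hSpos : ∀ a, 0 < S a := hpos
  have hTpos : 0 < T := by
    apply Finset.sum_pos
    · intro a _
      exact Real.sqrt_pos.2 (hSpos a)
    · exact Finset.univ_nonempty
  have hqstar_eq : ∀ a, qstar a = Real.sqrt (S a) / T := fun a => rfl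
  have hqstarpos : ∀ a, 0 < qstar a := by
    intro a
    rw [hqstar_eq]
    exact div_pos (Real.sqrt_pos.2 (hSpos a)) hTpos
  have hqstarPMF : IsPMF qstar := by
    constructor
    · intro a
      exact (hqstarpos a).le
    · simp only [hqstar_eq, ← Finset.sum_div, ← hTdef]
      exact div_self hTpos.ne'
  -- value at qstar
  have hsumstar : (∑ a, S a / qstar a) = T ^ 2 := by
    have : ∀ a ∈ Finset.univ, S a / qstar a = Real.sqrt (S a) * T := by
      intro a _
      rw [hqstar_eq, div_div_eq_mul_div, mul_comm, mul_div_assoc,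
        Real.div_sqrt, mul_comm]
    rw [Finset.sum_congr rfl this, ← Finset.sum_mul, ← hTdef, sq]
  have hobjstar : (∑ x, ∑ a, pX x * qstar a * (p x a / qstar a - 1) ^ 2)
      = T ^ 2 - 1 := by
    rw [objective_eq_aux pX hpX p hp qstar hqstarPMF hqstarpos]
    rw [show (∑ a, (∑ x, pX x * p x a ^ 2) / qstar a) = ∑ a, S a / qstar a from rfl,
      hsumstar]
  have hobj : ∀ q : A → ℝ, IsPMF q → (∀ a, 0 < q a) →
      (∑ x, ∑ a, pX x * q a * (p x a / q a - 1) ^ 2)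
        = (∑ a, S a / q a) - 1 := by
    intro q hq hqp
    exact objective_eq_aux pX hpX p hp q hq hqp
  refine ⟨⟨hqstarPMF, hqstarpos⟩, ?_, ?_⟩
  · intro q hq hqp
    rw [hobj q hq hqp, hobjstar]
    have := key_identity S hSpos q hq hqp
    have hnn : 0 ≤ ∑ a, (Real.sqrt (S a) / Real.sqrt (q a)
        - (∑ a', Real.sqrt (S a')) * Real.sqrt (q a)) ^ 2 :=
      Finset.sum_nonneg fun a _ => sq_nonneg _
    rw [← hTdef] at this
    linarith
  · intro q hq hqp heq
    rw [hobj q hq hqp, hobjstar] at heq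
    have hkey := key_identity S hSpos q hq hqp
    rw [← hTdef] at hkey
    have hzero : (∑ a, (Real.sqrt (S a) / Real.sqrt (q a)
        - T * Real.sqrt (q a)) ^ 2) = 0 := by linarith
    have hterm : ∀ a ∈ Finset.univ, (Real.sqrt (S a) / Real.sqrt (q a)
        - T * Real.sqrt (q a)) ^ 2 = 0 :=
      (Finset.sum_eq_zero_iff_of_nonneg fun a _ => sq_nonneg _).1 hzero
    funext a
    have h0 := hterm a (Finset.mem_univ a)
    have h1 : Real.sqrt (S a) / Real.sqrt (q a) = T * Real.sqrt (q a) := by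
      have := pow_eq_zero_iff (n := 2) (by norm_num) |>.1 h0
      linarith [sub_eq_zero.1 this]
    have hq0 : Real.sqrt (q a) ≠ 0 := ne_of_gt (Real.sqrt_pos.2 (hqp a))
    have h2 : Real.sqrt (S a) = T * q a := by
      have := congrArg (· * Real.sqrt (q a)) h1
      simp only [div_mul_cancel₀ _ hq0] at this
      rw [this, mul_assoc, Real.mul_self_sqrt (hqp a).le]
    rw [hqstar_eq, h2, mul_comm, mul_div_assoc, div_self hTpos.ne', mul_one]
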